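/- Let d ≥ 1, let A ⊆ ℤ^d, and let u ∈ ℤ^d be nonzero. Set A_1 = {a + k·u : a ∈ A, k ∈ ℕ} and A_2 = {a − k·u : a ∈ A, k ∈ ℕ}, and assume A_1 ∩ A_2 = A. Suppose D, D_1, D_2 ∈ ℚ[ℤ^d] are nonzero and the convolutions P := D ⋆ 1_A, P_1 := D_1 ⋆ 1_{A_1}, P_2 := D_2 ⋆ 1_{A_2} are all finitely supported. Then P_1/D_1 + P_2/D_2 = P/D in the fraction field of ℚ[ℤ^d]; that is, S(1_{A_1}) + S(1_{A_2}) = S(1_A). (This is the two-cone case at the heart of the proof of the paper's Lemma 9.6.) -/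

import Mathlib

/-- The convolution `D ⋆ f` of an element `D` of the group algebra `ℚ[ℤ^d]`
with a function `f : ℤ^d → ℚ`: `(D ⋆ f)(x) = Σ_{m ∈ support D} D(m) · f(x - m)`. -/
noncomputable def conv {d : ℕ} (D : AddMonoidAlgebra ℚ (Fin d → ℤ)) (f : (Fin d → ℤ) → ℚ) :
    (Fin d → ℤ) → ℚ :=
  fun x => ∑ m ∈ D.coeff.support, D.coeff m * f (x - m)

lemma conv_eq_sum {d : ℕ} (D : AddMonoidAlgebra ℚ (Fin d → ℤ)) (f : (Fin d → ℤ) → ℚ) (x) :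
    conv D f x = D.coeff.sum fun m c => c * f (x - m) := rfl

lemma conv_mul {d : ℕ} (E F : AddMonoidAlgebra ℚ (Fin d → ℤ)) (f : (Fin d → ℤ) → ℚ) (x) :
    conv (E * F) f x = conv E (conv F f) x := by
  rw [conv_eq_sum, conv_eq_sum, AddMonoidAlgebra.mul_def]
  simp only [AddMonoidAlgebra.coeff_finsuppSum, AddMonoidAlgebra.coeff_single]
  rw [Finsupp.sum_sum_index (by intro m; simp) (by intro m b₁ b₂; rw [add_mul])]
  apply Finsupp.sum_congr
  intro a _
  rw [Finsupp.sum_sum_index (by intro m; simp) (by intro m b₁ b₂; rw [add_mul])]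
  rw [conv_eq_sum, Finsupp.mul_sum]
  apply Finsupp.sum_congr
  intro b _
  rw [Finsupp.sum_single_index (by simp)]
  rw [sub_sub]
  ring

lemma apply_eq_conv {d : ℕ} (R : AddMonoidAlgebra ℚ (Fin d → ℤ)) (x) :
    R.coeff x = conv R (fun y => if y = 0 then 1 else 0) x := by
  rw [conv]
  simp only [sub_eq_zero, mul_ite, mul_one, mul_zero]
  rw [Finset.sum_ite_eq R.coeff.support x (fun m => R.coeff m)]
  by_cases h : x ∈ R.coeff.support
  · simp [h]
  · simp only [h, if_false]
    exact (Finsupp.notMem_support_iff.mp h)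

lemma mul_apply_conv {d : ℕ} (E Q : AddMonoidAlgebra ℚ (Fin d → ℤ)) (x) :
    (E * Q).coeff x = conv E (fun y => Q.coeff y) x := by
  rw [apply_eq_conv (E * Q) x, conv_mul]
  congr 1
  funext y
  exact (apply_eq_conv Q y).symm

lemma conv_sub_single {d : ℕ} (u : Fin d → ℤ) (f : (Fin d → ℤ) → ℚ) (x) :
    conv ((1 : AddMonoidAlgebra ℚ (Fin d → ℤ)) - AddMonoidAlgebra.single u 1) f x
      = f x - f (x - u) := by
  rw [conv_eq_sum, AddMonoidAlgebra.coeff_sub]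
  rw [Finsupp.sum_sub_index (by intro m b₁ b₂; rw [sub_mul])]
  rw [AddMonoidAlgebra.one_def, AddMonoidAlgebra.coeff_single, AddMonoidAlgebra.coeff_single]
  rw [Finsupp.sum_single_index (by simp), Finsupp.sum_single_index (by simp)]
  simp

lemma sub_single_ne_zero {d : ℕ} (u : Fin d → ℤ) (hu : u ≠ 0) :
    ((1 : AddMonoidAlgebra ℚ (Fin d → ℤ)) - AddMonoidAlgebra.single u 1) ≠ 0 := by
  intro h
  rw [sub_eq_zero, AddMonoidAlgebra.one_def] at h
  rw [AddMonoidAlgebra.single_inj] at h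
  simp [hu.symm] at h

/-- The two-cone case of Lemma 9.6: given `A ⊆ ℤ^d` and a nonzero `u ∈ ℤ^d`, with
`A_1 = A + ℕ·u`, `A_2 = A - ℕ·u` and `A_1 ∩ A_2 = A`, the Brion–Vergne sums satisfy
`S(1_{A_1}) + S(1_{A_2}) = S(1_A)` in the fraction field of `ℚ[ℤ^d]`. -/
theorem sum_two_cone_subdivision {d : ℕ} (hd : 1 ≤ d) (A A₁ A₂ : Set (Fin d → ℤ))
    (u : Fin d → ℤ) (hu : u ≠ 0)
    (hA₁ : A₁ = {x : Fin d → ℤ | ∃ a ∈ A, ∃ k : ℕ, x = a + (k : ℤ) • u})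
    (hA₂ : A₂ = {x : Fin d → ℤ | ∃ a ∈ A, ∃ k : ℕ, x = a - (k : ℤ) • u})
    (hA : A₁ ∩ A₂ = A)
    (D D₁ D₂ P P₁ P₂ : AddMonoidAlgebra ℚ (Fin d → ℤ))
    (hD : D ≠ 0) (hD₁ : D₁ ≠ 0) (hD₂ : D₂ ≠ 0)
    (hP : ∀ x, P.coeff x = conv D (Set.indicator A 1) x)
    (hP₁ : ∀ x, P₁.coeff x = conv D₁ (Set.indicator A₁ 1) x)
    (hP₂ : ∀ x, P₂.coeff x = conv D₂ (Set.indicator A₂ 1) x) :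
    (algebraMap (AddMonoidAlgebra ℚ (Fin d → ℤ))
          (FractionRing (AddMonoidAlgebra ℚ (Fin d → ℤ))) P₁) /
        (algebraMap (AddMonoidAlgebra ℚ (Fin d → ℤ))
          (FractionRing (AddMonoidAlgebra ℚ (Fin d → ℤ))) D₁) +
      (algebraMap (AddMonoidAlgebra ℚ (Fin d → ℤ))
          (FractionRing (AddMonoidAlgebra ℚ (Fin d → ℤ))) P₂) /
        (algebraMap (AddMonoidAlgebra ℚ (Fin d → ℤ))
          (FractionRing (AddMonoidAlgebra ℚ (Fin d → ℤ))) D₂) =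
      (algebraMap (AddMonoidAlgebra ℚ (Fin d → ℤ))
          (FractionRing (AddMonoidAlgebra ℚ (Fin d → ℤ))) P) /
        (algebraMap (AddMonoidAlgebra ℚ (Fin d → ℤ))
          (FractionRing (AddMonoidAlgebra ℚ (Fin d → ℤ))) D) := by
  have hdom : IsDomain (AddMonoidAlgebra ℚ (Fin d → ℤ)) := NoZeroDivisors.to_isDomain _
  set v : AddMonoidAlgebra ℚ (Fin d → ℤ) := 1 - AddMonoidAlgebra.single u 1 with hv_def
  have hv : v ≠ 0 := sub_single_ne_zero u hu
  set B : Set (Fin d → ℤ) := A₁ ∪ A₂ with hB_def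
  -- B is invariant under translation by u
  have hBinv : ∀ x : Fin d → ℤ, x ∈ B ↔ x - u ∈ B := by
    intro x
    constructor
    · rintro (h | h)
      · rw [hA₁] at h
        obtain ⟨a, ha, k, rfl⟩ := h
        cases k with
        | zero => exact Or.inr (by rw [hA₂]; exact ⟨a, ha, 1, by push_cast; module⟩)
        | succ n => exact Or.inl (by rw [hA₁]; exact ⟨a, ha, n, by push_cast; module⟩)
      · rw [hA₂] at h
        obtain ⟨a, ha, k, rfl⟩ := h
        exact Or.inr (by rw [hA₂]; exact ⟨a, ha, k + 1, by push_cast; module⟩)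
    · rintro (h | h)
      · left; rw [hA₁] at h ⊢
        obtain ⟨a, ha, k, hk⟩ := h
        rw [sub_eq_iff_eq_add] at hk
        exact ⟨a, ha, k + 1, by rw [hk]; push_cast; module⟩
      · rw [hA₂] at h
        obtain ⟨a, ha, k, hk⟩ := h
        rw [sub_eq_iff_eq_add] at hk
        cases k with
        | zero => exact Or.inl (by rw [hA₁]; exact ⟨a, ha, 1, by rw [hk]; push_cast; module⟩)
        | succ n => exact Or.inr (by rw [hA₂]; exact ⟨a, ha, n, by rw [hk]; push_cast; module⟩)
  -- indicator identity
  have hind : ∀ x : Fin d → ℤ, Set.indicator A₁ (1 : (Fin d → ℤ) → ℚ) x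
      + Set.indicator A₂ 1 x = Set.indicator A 1 x + Set.indicator B 1 x := by
    intro x
    rw [← hA, hB_def]
    by_cases h1 : x ∈ A₁ <;> by_cases h2 : x ∈ A₂ <;>
      simp [Set.indicator_apply, h1, h2]
  -- conv v kills 1_B
  have hconvB : ∀ x, conv v (Set.indicator B 1) x = 0 := by
    intro x
    rw [hv_def, conv_sub_single]
    have : x ∈ B ↔ x - u ∈ B := hBinv x
    by_cases h : x ∈ B
    · rw [Set.indicator_of_mem h, Set.indicator_of_mem (this.mp h)]; simp
    · rw [Set.indicator_of_notMem h, Set.indicator_of_notMem (fun hc => h (this.mpr hc))]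
      simp
  -- main algebraic identity
  have key : v * (D * D₂) * P₁ + v * (D * D₁) * P₂ = v * (D₁ * D₂) * P := by
    ext x
    have e₁ : (v * (D * D₂) * P₁).coeff x = conv (D * D₁ * D₂ * v) (Set.indicator A₁ 1) x := by
      rw [mul_apply_conv]
      have : (fun y => P₁.coeff y) = conv D₁ (Set.indicator A₁ 1) := funext hP₁
      rw [this, ← conv_mul]
      have : v * (D * D₂) * D₁ = D * D₁ * D₂ * v := by ring
      rw [this]
    have e₂ : (v * (D * D₁) * P₂).coeff x = conv (D * D₁ * D₂ * v) (Set.indicator A₂ 1) x := by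
      rw [mul_apply_conv]
      have : (fun y => P₂.coeff y) = conv D₂ (Set.indicator A₂ 1) := funext hP₂
      rw [this, ← conv_mul]
      have : v * (D * D₁) * D₂ = D * D₁ * D₂ * v := by ring
      rw [this]
    have e₃ : (v * (D₁ * D₂) * P).coeff x = conv (D * D₁ * D₂ * v) (Set.indicator A 1) x := by
      rw [mul_apply_conv]
      have : (fun y => P.coeff y) = conv D (Set.indicator A 1) := funext hP
      rw [this, ← conv_mul]
      have : v * (D₁ * D₂) * D = D * D₁ * D₂ * v := by ring
      rw [this]
    have ezero : conv (D * D₁ * D₂ * v) (Set.indicator B 1) x = 0 := by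
      rw [conv_mul]
      have hz : conv v (Set.indicator B 1) = fun _ => (0:ℚ) := funext hconvB
      rw [hz]
      simp [conv]
    rw [AddMonoidAlgebra.coeff_add, Finsupp.add_apply, e₁, e₂, e₃]
    have hsum : conv (D * D₁ * D₂ * v) (Set.indicator A₁ 1) x
        + conv (D * D₁ * D₂ * v) (Set.indicator A₂ 1) x
        = conv (D * D₁ * D₂ * v) (Set.indicator A 1) x
          + conv (D * D₁ * D₂ * v) (Set.indicator B 1) x := by
      simp only [conv]
      rw [← Finset.sum_add_distrib, ← Finset.sum_add_distrib]
      apply Finset.sum_congr rfl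
      intro m _
      rw [← mul_add, ← mul_add, hind]
    rw [hsum, ezero, add_zero]
  have hkey2 : D * D₂ * P₁ + D * D₁ * P₂ = D₁ * D₂ * P := by
    apply mul_left_cancel₀ hv
    linear_combination key
  have hD' : algebraMap (AddMonoidAlgebra ℚ (Fin d → ℤ))
      (FractionRing (AddMonoidAlgebra ℚ (Fin d → ℤ))) D ≠ 0 :=
    fun h => hD (IsFractionRing.to_map_eq_zero_iff.mp h)
  have hD₁' : algebraMap (AddMonoidAlgebra ℚ (Fin d → ℤ))
      (FractionRing (AddMonoidAlgebra ℚ (Fin d → ℤ))) D₁ ≠ 0 :=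
    fun h => hD₁ (IsFractionRing.to_map_eq_zero_iff.mp h)
  have hD₂' : algebraMap (AddMonoidAlgebra ℚ (Fin d → ℤ))
      (FractionRing (AddMonoidAlgebra ℚ (Fin d → ℤ))) D₂ ≠ 0 :=
    fun h => hD₂ (IsFractionRing.to_map_eq_zero_iff.mp h)
  rw [div_add_div _ _ hD₁' hD₂', div_eq_div_iff (mul_ne_zero hD₁' hD₂') hD']
  have := congrArg (algebraMap (AddMonoidAlgebra ℚ (Fin d → ℤ))
      (FractionRing (AddMonoidAlgebra ℚ (Fin d → ℤ)))) hkey2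
  simp only [map_add, map_mul] at this
  linear_combination this
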